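/- Let L be a Moufang loop containing a group T generated by a set S of elements and an element u such that ((g₁g₂)u)² = 1 for all g₁,g₂ ∈ S ∪ {e}. Then the Chein relations (c1) g₁(g₂u)=(g₂g₁)u, (c2) (g₁u)g₂=(g₁g₂⁻¹)u, (c3) (g₁u)(g₂u)=g₂⁻¹g₁ hold for ALL g₁,g₂ ∈ T. -/

import Mathlib

/-- A Moufang loop: a loop (a quasigroup with two-sided identity) satisfying the
Moufang identities (m1) `z(x(yx)) = ((zx)y)x`, (m2) `x(y(xz)) = ((xy)x)z`,
(m3) `(xy)(zx) = x((yz)x)`. -/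
class MoufangLoop (L : Type*) extends Mul L, One L where
  one_mul : ∀ a : L, 1 * a = a
  mul_one : ∀ a : L, a * 1 = a
  left_bij : ∀ a : L, Function.Bijective fun x : L => a * x
  right_bij : ∀ a : L, Function.Bijective fun x : L => x * a
  m1 : ∀ x y z : L, z * (x * (y * x)) = ((z * x) * y) * x
  m2 : ∀ x y z : L, x * (y * (x * z)) = ((x * y) * x) * z
  m3 : ∀ x y z : L, (x * y) * (z * x) = x * ((y * z) * x)

/-- The subset `T` of the Moufang loop `L`, together with the inversion map `inv`,
forms a subgroup of `L`: it contains the identity, is closed under multiplication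
and inversion, multiplication restricted to `T` is associative, and `inv` provides
two-sided inverses in `T`. -/
structure IsSubgroupOfLoop {L : Type*} [MoufangLoop L] (T : Set L) (inv : L → L) : Prop where
  one_mem : (1 : L) ∈ T
  mul_mem : ∀ a ∈ T, ∀ b ∈ T, a * b ∈ T
  inv_mem : ∀ a ∈ T, inv a ∈ T
  assoc : ∀ a ∈ T, ∀ b ∈ T, ∀ c ∈ T, (a * b) * c = a * (b * c)
  mul_inv : ∀ a ∈ T, a * inv a = 1
  inv_mul : ∀ a ∈ T, inv a * a = 1

/-- `T` is generated (as a group) by the subset `S`: every element of `T` is an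
iterated product of elements of `S` and their inverses. -/
def GeneratedBy {L : Type*} [MoufangLoop L] (T : Set L) (inv : L → L) (S : Set L) : Prop :=
  S ⊆ T ∧ ∀ w ∈ T, ∃ l : List L,
    (∀ x ∈ l, x ∈ S ∨ ∃ s ∈ S, x = inv s) ∧ w = l.foldr (· * ·) 1

namespace ChAux

variable {L : Type*} [MoufangLoop L]

lemma om (a : L) : (1 : L) * a = a := MoufangLoop.one_mul a
lemma mo (a : L) : a * 1 = a := MoufangLoop.mul_one a
lemma lcan (a : L) {x y : L} (h : a * x = a * y) : x = y := (MoufangLoop.left_bij a).1 h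
lemma rcan (a : L) {x y : L} (h : x * a = y * a) : x = y := (MoufangLoop.right_bij a).1 h

noncomputable def li (a : L) : L := Classical.choose ((MoufangLoop.right_bij a).2 1)

lemma li_mul (a : L) : li a * a = 1 := Classical.choose_spec ((MoufangLoop.right_bij a).2 1)

lemma lip' (a z : L) : a * (li a * z) = z := by
  have h := MoufangLoop.m2 (li a) a z
  rw [li_mul, om] at h
  exact lcan (li a) h

lemma mul_li (a : L) : a * li a = 1 := by
  have h := lip' a 1; rwa [mo] at h

lemma li_li (a : L) : li (li a) = a := by
  apply rcan (li a)
  rw [li_mul, mul_li]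

lemma lip (a z : L) : li a * (a * z) = z := by
  have h := lip' (li a) z; rwa [li_li] at h

lemma rip (w a : L) : (w * a) * li a = w := by
  have h := MoufangLoop.m1 a (li a) w
  rw [li_mul, mo] at h
  exact rcan a h.symm

lemma rip' (w a : L) : (w * li a) * a = w := by
  have h := rip w (li a); rwa [li_li] at h

lemma li_of_eq {a b : L} (h : a * b = 1) : b = li a :=
  lcan a (by rw [h, mul_li])

lemma li_of_eq' {a b : L} (h : a * b = 1) : a = li b :=
  rcan b (by rw [h, li_mul])

lemma li_one : li (1 : L) = 1 := (li_of_eq (om 1)).symm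

lemma li_mul_rev (a b : L) : li (a * b) = li b * li a := by
  have h1 : li (a * b) * a = li b := by
    have h := lip (a * b) (li b); rwa [rip a b] at h
  have h2 := rip (li (a * b)) a
  rw [h1] at h2
  exact h2.symm

lemma ralt (z x : L) : (z * x) * x = z * (x * x) := by
  have h := MoufangLoop.m1 x 1 z
  rw [om, mo] at h
  exact h.symm

lemma flex (x y : L) : x * (y * x) = (x * y) * x := by
  have h := MoufangLoop.m1 x y 1
  rwa [om, om] at h

/-! u-lemmas.  `Q g` is the statement `g*u = u*li g`. -/

variable {u : L}

lemma li_u (h2 : u * u = 1) : li u = u := (li_of_eq h2).symm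

lemma sigq (h2 : u * u = 1) {g : L} (hg : g * u = u * li g) : u * (g * u) = li g := by
  rw [hg]
  have h := lip' u (li g)
  rwa [li_u h2] at h

lemma q_of_sig (h2 : u * u = 1) {g : L} (h : u * (g * u) = li g) : g * u = u * li g := by
  have h3 := lip' u (g * u)
  rw [li_u h2, h] at h3
  exact h3.symm

lemma q_of_sq (h2 : u * u = 1) {g : L} (h : (g * u) * (g * u) = 1) : g * u = u * li g := by
  have h1 : g * u = li (g * u) := li_of_eq' h
  rwa [li_mul_rev, li_u h2] at h1

lemma sq_of_q (h2 : u * u = 1) {g : L} (hg : g * u = u * li g) : (g * u) * (g * u) = 1 := by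
  nth_rewrite 1 [hg]
  rw [MoufangLoop.m3 u (li g) g, li_mul, om, h2]

lemma up_eq (h2 : u * u = 1) {g : L} (hg : g * u = u * li g) : u * g = li g * u := by
  have h1 : (u * li g) * g = u := rip' u g
  have h2' : g * (u * g) = u := by
    rw [flex g u, hg]; exact h1
  have h3 := lip g (u * g)
  rw [h2'] at h3
  exact h3.symm

lemma q_inv (h2 : u * u = 1) {g : L} (hg : g * u = u * li g) :
    li g * u = u * li (li g) := by
  rw [li_li]; exact (up_eq h2 hg).symm

lemma c2l (h2 : u * u = 1) {g₁ g₂ : L} (hg₂ : g₂ * u = u * li g₂) :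
    (g₁ * u) * g₂ = (g₁ * li g₂) * u := by
  have h := MoufangLoop.m1 u g₂ g₁
  rw [sigq h2 hg₂] at h
  have h4 : (((g₁ * u) * g₂) * u) * u = (g₁ * li g₂) * u := by rw [← h]
  rwa [ralt, h2, mo] at h4

lemma ulhs (h2 : u * u = 1) {g₁ g₂ : L} (h₁ : g₁ * u = u * li g₁)
    (hg₂ : g₂ * u = u * li g₂) : u * (g₁ * (g₂ * u)) = li g₁ * li g₂ := by
  rw [hg₂]
  have h := MoufangLoop.m2 u g₁ (li g₂)
  rw [up_eq h2 h₁, ralt, h2, mo] at h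
  exact h

lemma c1f (h2 : u * u = 1) {g₁ g₂ : L} (h₁ : g₁ * u = u * li g₁)
    (hq₂ : g₂ * u = u * li g₂) (h21 : (g₂ * g₁) * u = u * li (g₂ * g₁)) :
    g₁ * (g₂ * u) = (g₂ * g₁) * u := by
  apply lcan u
  rw [ulhs h2 h₁ hq₂, sigq h2 h21, li_mul_rev]

lemma c1r (h2 : u * u = 1) {g₁ g₂ : L} (h₁ : g₁ * u = u * li g₁)
    (hq₂ : g₂ * u = u * li g₂) (heq : g₁ * (g₂ * u) = (g₂ * g₁) * u) :
    (g₂ * g₁) * u = u * li (g₂ * g₁) := by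
  apply q_of_sig h2
  rw [← heq, ulhs h2 h₁ hq₂, li_mul_rev]

lemma c3l (h2 : u * u = 1) {g₁ g₂ : L} (h₁ : g₁ * u = u * li g₁)
    (h' : (li g₁ * g₂) * u = u * li (li g₁ * g₂)) :
    (g₁ * u) * (g₂ * u) = li g₂ * g₁ := by
  rw [h₁, MoufangLoop.m3 u (li g₁) g₂, sigq h2 h', li_mul_rev, li_li]


/-! Lemmas relative to the subgroup `T`. -/

variable {T : Set L} {inv : L → L}

lemma inv_eq_li (hT : IsSubgroupOfLoop T inv) {a : L} (ha : a ∈ T) : inv a = li a :=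
  li_of_eq (hT.mul_inv a ha)

lemma li_memT (hT : IsSubgroupOfLoop T inv) {a : L} (ha : a ∈ T) : li a ∈ T := by
  have h := hT.inv_mem a ha
  rwa [inv_eq_li hT ha] at h

lemma q1 (hT : IsSubgroupOfLoop T inv) (h2 : u * u = 1) {a b : L}
    (haT : a ∈ T) (hbT : b ∈ T)
    (ha : a * u = u * li a) (hb : b * u = u * li b)
    (hab : (a * b) * u = u * li (a * b)) :
    (a * li b) * u = u * li (a * li b) := by
  have hbaQ : (li b * li a) * u = u * li (li b * li a) := by
    have h := q_inv h2 hab; rwa [li_mul_rev a b] at h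
  have hz : (li b * u) * a = (li b * li a) * u := c2l h2 ha
  have huz : u * ((li b * u) * a) = a * b := by
    rw [hz, sigq h2 hbaQ, ← li_mul_rev, li_li]
  have hm := MoufangLoop.m3 (li a) u ((li b * u) * a)
  rw [rip (li b * u) a, huz] at hm
  have hassoc : li a * ((a * b) * li a) = b * li a := by
    rw [← hT.assoc (li a) (li_memT hT haT) (a * b) (hT.mul_mem a haT b hbT) (li a) (li_memT hT haT),
      ← hT.assoc (li a) (li_memT hT haT) a haT b hbT, li_mul, om]
  rw [hassoc, ← up_eq h2 ha, MoufangLoop.m3 u a (li b)] at hm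
  apply q_of_sig h2
  rw [hm, li_mul_rev, li_li]

lemma key (hT : IsSubgroupOfLoop T inv) (h2 : u * u = 1) {a b c : L}
    (haT : a ∈ T) (hbT : b ∈ T) (hcT : c ∈ T)
    (ha : a * u = u * li a) (hb : b * u = u * li b) (hc : c * u = u * li c)
    (hab' : (a * li b) * u = u * li (a * li b))
    (hac : (a * c) * u = u * li (a * c))
    (hbc : (b * c) * u = u * li (b * c)) :
    (a * (b * c)) * u = u * li (a * (b * c)) := by
  have laT := li_memT hT haT
  have lbT := li_memT hT hbT
  have lcT := li_memT hT hcT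
  have e1 : (a * u) * b = (a * li b) * u := c2l h2 hb
  have e2 : c * (a * u) = (a * c) * u := c1f h2 hc ha hac
  have e3 := MoufangLoop.m3 (a * u) b c
  rw [e1, e2] at e3
  have hel : li (a * li b) * (a * c) = b * c := by
    rw [li_mul_rev, li_li,
      hT.assoc b hbT (li a) laT (a * c) (hT.mul_mem a haT c hcT),
      ← hT.assoc (li a) laT a haT c hcT, li_mul, om]
  have hy : (li (a * li b) * (a * c)) * u = u * li (li (a * li b) * (a * c)) := by
    rw [hel]; exact hbc
  have e4 : ((a * li b) * u) * ((a * c) * u) = li (a * c) * (a * li b) := c3l h2 hab' hy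
  have hval : li (a * c) * (a * li b) = li c * li b := by
    rw [li_mul_rev a c,
      hT.assoc (li c) lcT (li a) laT (a * li b) (hT.mul_mem a haT (li b) lbT),
      ← hT.assoc (li a) laT a haT (li b) lbT, li_mul, om]
  rw [e4, hval] at e3
  have hsq : (a * u) * (a * u) = 1 := sq_of_q h2 ha
  have hiau : li (a * u) = a * u := (li_of_eq hsq).symm
  have st2 : (b * c) * (a * u) = (a * u) * (li c * li b) := by
    have h5 := lip' (a * u) ((b * c) * (a * u))
    rw [hiau, ← e3] at h5
    exact h5.symm
  have hq2 : (li c * li b) * u = u * li (li c * li b) := by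
    have h := q_inv h2 hbc; rwa [li_mul_rev b c] at h
  have e5 : (a * u) * (li c * li b) = (a * li (li c * li b)) * u := c2l h2 hq2
  rw [li_mul_rev (li c) (li b), li_li, li_li] at e5
  rw [e5] at st2
  exact c1r h2 hbc ha st2


/-- A generator or the loop-inverse of one. -/
def IsLetter (S : Set L) (x : L) : Prop := x ∈ S ∨ ∃ s ∈ S, x = li s

end ChAux

open ChAux in
/-- Theorem 2.1: let `L` be a Moufang loop containing a group `T` generated by a set
`S`, and `u ∈ L` with `((g₁g₂)u)² = 1` for all `g₁, g₂ ∈ S ∪ {e}`. Then the Chein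
relations (c1) `g₁(g₂u) = (g₂g₁)u`, (c2) `(g₁u)g₂ = (g₁g₂⁻¹)u`, and
(c3) `(g₁u)(g₂u) = g₂⁻¹g₁` hold for all `g₁, g₂ ∈ T`. -/
theorem chein_relations_all {L : Type*} [MoufangLoop L]
    (T : Set L) (inv : L → L) (S : Set L) (u : L)
    (hT : IsSubgroupOfLoop T inv) (hgen : GeneratedBy T inv S)
    (hu : ∀ g₁ ∈ insert (1 : L) S, ∀ g₂ ∈ insert (1 : L) S,
      ((g₁ * g₂) * u) * ((g₁ * g₂) * u) = 1) :
    ∀ g₁ ∈ T, ∀ g₂ ∈ T,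
      g₁ * (g₂ * u) = (g₂ * g₁) * u ∧
      (g₁ * u) * g₂ = (g₁ * inv g₂) * u ∧
      (g₁ * u) * (g₂ * u) = inv g₂ * g₁ := by
  have hSub : S ⊆ T := hgen.1
  have h2 : u * u = 1 := by
    have h := hu 1 (Set.mem_insert 1 S) 1 (Set.mem_insert 1 S)
    rwa [om, om] at h
  have hq_st : ∀ s ∈ S, ∀ t ∈ S, (s * t) * u = u * li (s * t) := fun s hs t ht =>
    q_of_sq h2 (hu s (Set.mem_insert_of_mem _ hs) t (Set.mem_insert_of_mem _ ht))
  have hq_s : ∀ s ∈ S, s * u = u * li s := by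
    intro s hs
    have h := hu s (Set.mem_insert_of_mem _ hs) 1 (Set.mem_insert 1 S)
    rw [mo] at h
    exact q_of_sq h2 h
  have hLT : ∀ x, IsLetter S x → x ∈ T := by
    rintro x (h | ⟨s, hs, rfl⟩)
    · exact hSub h
    · exact li_memT hT (hSub hs)
  have hLq : ∀ x, IsLetter S x → x * u = u * li x := by
    rintro x (h | ⟨s, hs, rfl⟩)
    · exact hq_s x h
    · exact q_inv h2 (hq_s s hs)
  have hLinv : ∀ x, IsLetter S x → IsLetter S (li x) := by
    rintro x (h | ⟨s, hs, rfl⟩)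
    · exact Or.inr ⟨x, h, rfl⟩
    · rw [li_li]; exact Or.inl hs
  have hpair : ∀ x, IsLetter S x → ∀ y, IsLetter S y →
      (x * y) * u = u * li (x * y) := by
    rintro x hx y hy
    rcases hx with hxs | ⟨s, hs, rfl⟩ <;> rcases hy with hys | ⟨t, ht, rfl⟩
    · exact hq_st x hxs y hys
    · exact q1 hT h2 (hSub hxs) (hSub ht) (hq_s x hxs) (hq_s t ht) (hq_st x hxs t ht)
    · have h1 : (li y * li s) * u = u * li (li y * li s) := by
        have h := q_inv h2 (hq_st s hs y hys)
        rwa [li_mul_rev s y] at h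
      have h2' := q1 hT h2 (li_memT hT (hSub hys)) (li_memT hT (hSub hs))
        (q_inv h2 (hq_s y hys)) (q_inv h2 (hq_s s hs)) h1
      rw [li_li] at h2'
      have h3 := q_inv h2 h2'
      rwa [li_mul_rev (li y) s, li_li] at h3
    · have h := q_inv h2 (hq_st t ht s hs)
      rwa [li_mul_rev t s] at h
  have hfoldT : ∀ l : List L, (∀ x ∈ l, IsLetter S x) → l.foldr (· * ·) 1 ∈ T := by
    intro l
    induction l with
    | nil => intro _; exact hT.one_mem
    | cons x k ih =>
      intro h
      exact hT.mul_mem x (hLT x (h x List.mem_cons_self)) _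
        (ih fun y hy => h y (List.mem_cons_of_mem x hy))
  have hfold : ∀ n : ℕ, ∀ l : List L, l.length ≤ n → (∀ x ∈ l, IsLetter S x) →
      (l.foldr (· * ·) 1) * u = u * li (l.foldr (· * ·) 1) := by
    intro n
    induction n with
    | zero =>
      intro l hl _
      have : l = [] := List.eq_nil_of_length_eq_zero (Nat.le_zero.mp hl)
      subst this
      show (1 : L) * u = u * li 1
      rw [om, li_one, mo]
    | succ n ih =>
      intro l hl hmem
      match l with
      | [] =>
        show (1 : L) * u = u * li 1
        rw [om, li_one, mo]
      | [x] =>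
        show (x * 1) * u = u * li (x * 1)
        rw [mo]
        exact hLq x (hmem x List.mem_cons_self)
      | x :: y :: k =>
        have hx := hmem x List.mem_cons_self
        have hy := hmem y (List.mem_cons_of_mem x List.mem_cons_self)
        have hk : ∀ z ∈ k, IsLetter S z := fun z hz =>
          hmem z (List.mem_cons_of_mem x (List.mem_cons_of_mem y hz))
        have hlen : k.length + 2 ≤ n + 1 := by simpa using hl
        have hxk : ∀ z ∈ x :: k, IsLetter S z := by
          rintro z hz
          rcases List.mem_cons.mp hz with rfl | hz
          · exact hx
          · exact hk z hz
        have hyk : ∀ z ∈ y :: k, IsLetter S z := by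
          rintro z hz
          rcases List.mem_cons.mp hz with rfl | hz
          · exact hy
          · exact hk z hz
        have hc := ih k (by omega) hk
        have hac := ih (x :: k) (by simp; omega) hxk
        have hbc := ih (y :: k) (by simp; omega) hyk
        show (x * (y * k.foldr (· * ·) 1)) * u = u * li (x * (y * k.foldr (· * ·) 1))
        exact key hT h2 (hLT x hx) (hLT y hy) (hfoldT k hk) (hLq x hx) (hLq y hy) hc
          (hpair x hx (li y) (hLinv y hy)) hac hbc
  have hqT : ∀ w ∈ T, w * u = u * li w := by
    intro w hw
    obtain ⟨l, hmem, hw'⟩ := hgen.2 w hw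
    subst hw'
    refine hfold l.length l le_rfl ?_
    intro x hx
    rcases hmem x hx with h | ⟨s, hs, rfl⟩
    · exact Or.inl h
    · rw [inv_eq_li hT (hSub hs)]
      exact Or.inr ⟨s, hs, rfl⟩
  intro g₁ hg₁ g₂ hg₂
  refine ⟨?_, ?_, ?_⟩
  · exact c1f h2 (hqT g₁ hg₁) (hqT g₂ hg₂) (hqT (g₂ * g₁) (hT.mul_mem g₂ hg₂ g₁ hg₁))
  · rw [inv_eq_li hT hg₂]
    exact c2l h2 (hqT g₂ hg₂)
  · rw [inv_eq_li hT hg₂]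
    exact c3l h2 (hqT g₁ hg₁)
      (hqT (li g₁ * g₂) (hT.mul_mem _ (li_memT hT hg₁) _ hg₂))
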